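/- Let X be a T1 regular space. The following are equivalent: (1) the hyperspace CL(X) with the Fell topology is a D_1-space; (2) the hyperspace K(X) of nonempty compact subsets with the Fell topology is a D_1-space; (3) F_n(X) with the Fell topology is a D_1-space for some n ≥ 2; (4) X is compact and metrizable. -/

import Mathlib

open Set TopologicalSpace

universe u v

/-- The Fell topology on the collection of all subsets of `X`, generated by the subbase
consisting of the sets `U⁻ = {H | H ∩ U ≠ ∅}` for `U` open and
`(Kᶜ)⁺ = {H | H ⊆ Kᶜ}` for `K` compact. -/
def fellTopology (X : Type u) [TopologicalSpace X] : TopologicalSpace (Set X) :=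
  TopologicalSpace.generateFrom
    ({S | ∃ U : Set X, IsOpen U ∧ S = {H : Set X | (H ∩ U).Nonempty}} ∪
     {S | ∃ K : Set X, IsCompact K ∧ S = {H : Set X | H ⊆ Kᶜ}})

/-- The Vietoris topology on the collection of all subsets of `X`, generated by the subbase
consisting of the sets `U⁺ = {H | H ⊆ U}` and `U⁻ = {H | H ∩ U ≠ ∅}` for `U` open. -/
def vietorisTopology (X : Type u) [TopologicalSpace X] : TopologicalSpace (Set X) :=
  TopologicalSpace.generateFrom
    ({S | ∃ U : Set X, IsOpen U ∧ S = {H : Set X | H ⊆ U}} ∪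
     {S | ∃ U : Set X, IsOpen U ∧ S = {H : Set X | (H ∩ U).Nonempty}})

/-- A collection `S` of subsets of `X`, viewed as a hyperspace with the Fell topology. -/
def FellHyper (X : Type u) [TopologicalSpace X] (S : Set (Set X)) : Type u :=
  {A : Set X // A ∈ S}

/-- A collection `S` of subsets of `X`, viewed as a hyperspace with the Vietoris topology. -/
def VietorisHyper (X : Type u) [TopologicalSpace X] (S : Set (Set X)) : Type u :=
  {A : Set X // A ∈ S}

instance FellHyper.instTopologicalSpace (X : Type u) [TopologicalSpace X] (S : Set (Set X)) :
    TopologicalSpace (FellHyper X S) :=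
  TopologicalSpace.induced (Subtype.val : {A : Set X // A ∈ S} → Set X) (fellTopology X)

instance VietorisHyper.instTopologicalSpace (X : Type u) [TopologicalSpace X] (S : Set (Set X)) :
    TopologicalSpace (VietorisHyper X S) :=
  TopologicalSpace.induced (Subtype.val : {A : Set X // A ∈ S} → Set X) (vietorisTopology X)

/-- The underlying subset of `X` of a point of a Fell hyperspace. -/
def FellHyper.carrier {X : Type u} [TopologicalSpace X] {S : Set (Set X)}
    (A : FellHyper X S) : Set X :=
  Subtype.val A

/-- The underlying subset of `X` of a point of a Vietoris hyperspace. -/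
def VietorisHyper.carrier {X : Type u} [TopologicalSpace X] {S : Set (Set X)}
    (A : VietorisHyper X S) : Set X :=
  Subtype.val A

/-- `CL(X)`: the nonempty closed subsets of `X`. -/
def CL (X : Type u) [TopologicalSpace X] : Set (Set X) := {A | A.Nonempty ∧ IsClosed A}

/-- `𝒦(X)`: the nonempty compact subsets of `X`. -/
def Kcal (X : Type u) [TopologicalSpace X] : Set (Set X) := {A | A.Nonempty ∧ IsCompact A}

/-- `ℱ(X)`: the nonempty finite subsets of `X`. -/
def Fcal (X : Type u) : Set (Set X) := {A | A.Nonempty ∧ A.Finite}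

/-- `ℱₙ(X)`: the nonempty subsets of `X` with at most `n` points. -/
def Fn (X : Type u) (n : ℕ) : Set (Set X) := {A | A.Nonempty ∧ A.encard ≤ n}

/-- A space is a `D₁`-space if every nonempty closed subset has a countable
neighborhood base. -/
def IsD1Space (Y : Type v) [TopologicalSpace Y] : Prop :=
  ∀ F : Set Y, F.Nonempty → IsClosed F →
    ∃ B : ℕ → Set Y, (∀ n, IsOpen (B n) ∧ F ⊆ B n) ∧
      ∀ V : Set Y, IsOpen V → F ⊆ V → ∃ n, B n ⊆ V

/-- A space is a `D₀`-space if every nonempty compact subset has a countable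
neighborhood base. -/
def IsD0Space (Y : Type v) [TopologicalSpace Y] : Prop :=
  ∀ F : Set Y, F.Nonempty → IsCompact F →
    ∃ B : ℕ → Set Y, (∀ n, IsOpen (B n) ∧ F ⊆ B n) ∧
      ∀ V : Set Y, IsOpen V → F ⊆ V → ∃ n, B n ⊆ V

/-- A space has a `G_δ`-diagonal if the diagonal is a `G_δ`-set in `X × X`. -/
def HasGdeltaDiagonal (X : Type u) [TopologicalSpace X] : Prop :=
  ∃ U : ℕ → Set (X × X), (∀ n, IsOpen (U n)) ∧ (⋂ n, U n) = {p : X × X | p.1 = p.2}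

/-- A space is perfect if every closed subset is a `G_δ`-set. -/
def IsPerfectSpace (Y : Type v) [TopologicalSpace Y] : Prop :=
  ∀ F : Set Y, IsClosed F → ∃ U : ℕ → Set Y, (∀ n, IsOpen (U n)) ∧ F = ⋂ n, U n

/-- A space has the compact-`G_δ` property if every compact subset is a `G_δ`-set. -/
def CompactGDeltaProperty (Y : Type v) [TopologicalSpace Y] : Prop :=
  ∀ K : Set Y, IsCompact K → ∃ U : ℕ → Set Y, (∀ n, IsOpen (U n)) ∧ K = ⋂ n, U n

/-- `γ`-space. -/
def IsGammaSpace (Y : Type v) [TopologicalSpace Y] : Prop :=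
  ∃ g : ℕ → Y → Set Y,
    (∀ n y, IsOpen (g n y) ∧ y ∈ g n y) ∧
    (∀ y, ∀ V : Set Y, IsOpen V → y ∈ V → ∃ n, g n y ⊆ V) ∧
    (∀ n y, ∃ m, ∀ z ∈ g m y, g m z ⊆ g n y)

/-- A space has a `G_δ*`-diagonal if there is a sequence `𝒰 n` of open covers such that
`{x} = ⋂ n, closure (st(x, 𝒰 n))` for every `x`. -/
def HasGdeltaStarDiagonal (X : Type u) [TopologicalSpace X] : Prop :=
  ∃ 𝒰 : ℕ → Set (Set X),
    (∀ n, ∀ U ∈ 𝒰 n, IsOpen U) ∧ (∀ n, ⋃₀ 𝒰 n = univ) ∧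
    ∀ x : X, (⋂ n, closure (⋃₀ {U ∈ 𝒰 n | x ∈ U})) = {x}

open Topology

section Basic

variable {X : Type u} [TopologicalSpace X]

/-- `U⁻`. -/
def lowerSet (U : Set X) : Set (Set X) := {H : Set X | (H ∩ U).Nonempty}

/-- `(Kᶜ)⁺`. -/
def missSet (K : Set X) : Set (Set X) := {H : Set X | H ⊆ Kᶜ}

def fellSubbase (X : Type u) [TopologicalSpace X] : Set (Set (Set X)) :=
  {S | ∃ U : Set X, IsOpen U ∧ S = {H : Set X | (H ∩ U).Nonempty}} ∪
    {S | ∃ K : Set X, IsCompact K ∧ S = {H : Set X | H ⊆ Kᶜ}}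

lemma fellTopology_eq (X : Type u) [TopologicalSpace X] :
    fellTopology X = TopologicalSpace.generateFrom (fellSubbase X) := rfl

lemma lowerSet_mem_fellSubbase {U : Set X} (hU : IsOpen U) : lowerSet U ∈ fellSubbase X :=
  Or.inl ⟨U, hU, rfl⟩

lemma missSet_mem_fellSubbase {K : Set X} (hK : IsCompact K) : missSet K ∈ fellSubbase X :=
  Or.inr ⟨K, hK, rfl⟩

lemma fellOpen_lowerSet {U : Set X} (hU : IsOpen U) : IsOpen[fellTopology X] (lowerSet U) :=
  TopologicalSpace.isOpen_generateFrom_of_mem (lowerSet_mem_fellSubbase hU)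

lemma fellOpen_missSet {K : Set X} (hK : IsCompact K) : IsOpen[fellTopology X] (missSet K) :=
  TopologicalSpace.isOpen_generateFrom_of_mem (missSet_mem_fellSubbase hK)

lemma isOpen_hyper_iff {S : Set (Set X)} {s : Set (FellHyper X S)} :
    IsOpen s ↔ ∃ O : Set (Set X), IsOpen[fellTopology X] O ∧ Subtype.val ⁻¹' O = s :=
  @isOpen_induced_iff _ _ (fellTopology X) s Subtype.val

lemma isOpen_hyper_preimage {S : Set (Set X)} {O : Set (Set X)}
    (hO : IsOpen[fellTopology X] O) :
    IsOpen (Subtype.val ⁻¹' O : Set (FellHyper X S)) :=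
  isOpen_hyper_iff.2 ⟨O, hO, rfl⟩

/-- The singleton map is continuous into the Fell topology. -/
lemma continuous_singleton_fell [T2Space X] :
    Continuous[_, fellTopology X] (fun x : X => ({x} : Set X)) := by
  rw [fellTopology_eq]
  rw [continuous_generateFrom_iff]
  rintro s (⟨U, hU, rfl⟩ | ⟨K, hK, rfl⟩)
  · convert hU using 1
    ext x
    simp [Set.singleton_inter_nonempty]
  · convert hK.isClosed.isOpen_compl using 1
    ext x
    simp [Set.singleton_subset_iff]

/-- The pair map is continuous into the Fell topology. -/
lemma continuous_pair_fell [T2Space X] :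
    Continuous[_, fellTopology X] (fun p : X × X => ({p.1, p.2} : Set X)) := by
  rw [fellTopology_eq, continuous_generateFrom_iff]
  rintro s (⟨U, hU, rfl⟩ | ⟨K, hK, rfl⟩)
  · have : (fun p : X × X => ({p.1, p.2} : Set X)) ⁻¹' {H | (H ∩ U).Nonempty}
        = (U ×ˢ univ) ∪ (univ ×ˢ U) := by
      ext ⟨a, b⟩
      constructor
      · rintro ⟨c, hc, hcU⟩
        rcases hc with rfl | rfl
        · exact Or.inl ⟨hcU, trivial⟩
        · exact Or.inr ⟨trivial, hcU⟩
      · rintro (⟨h, -⟩ | ⟨-, h⟩)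
        · exact ⟨a, Or.inl rfl, h⟩
        · exact ⟨b, Or.inr rfl, h⟩
    rw [this]
    exact (hU.prod isOpen_univ).union (isOpen_univ.prod hU)
  · have : (fun p : X × X => ({p.1, p.2} : Set X)) ⁻¹' {H | H ⊆ Kᶜ} = Kᶜ ×ˢ Kᶜ := by
      ext ⟨a, b⟩
      simp [Set.insert_subset_iff, Set.singleton_subset_iff]
    rw [this]
    exact hK.isClosed.isOpen_compl.prod hK.isClosed.isOpen_compl

end Basic

section Extraction

variable {X : Type u} [TopologicalSpace X]

lemma fellBasis (X : Type u) [TopologicalSpace X] :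
    @TopologicalSpace.IsTopologicalBasis (Set X) (fellTopology X)
      ((fun f => ⋂₀ f) '' {f | f.Finite ∧ f ⊆ fellSubbase X}) :=
  @TopologicalSpace.isTopologicalBasis_of_subbasis (Set X) (fellTopology X) _ (fellTopology_eq X)

lemma exists_finite_subbasis_nbhd {O : Set (Set X)} {A : Set X}
    (hO : IsOpen[fellTopology X] O) (hA : A ∈ O) :
    ∃ f : Set (Set (Set X)), f.Finite ∧ f ⊆ fellSubbase X ∧ A ∈ ⋂₀ f ∧ ⋂₀ f ⊆ O := by
  obtain ⟨v, hv, hAv, hvO⟩ :=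
    @TopologicalSpace.IsTopologicalBasis.exists_subset_of_mem_open (Set X) (fellTopology X) _
      (fellBasis X) A O hA hO
  obtain ⟨f, ⟨hfin, hsub⟩, rfl⟩ := hv
  exact ⟨f, hfin, hsub, hAv, hvO⟩

open Classical in
/-- Extract the compact set from a subbasic element of `missSet` form. -/
noncomputable def compactPart (e : Set (Set X)) : Set X :=
  if h : ∃ K : Set X, IsCompact K ∧ e = missSet K then h.choose else ∅

lemma compactPart_isCompact (e : Set (Set X)) : IsCompact (compactPart e) := by
  classical
  rw [compactPart]
  by_cases h : ∃ K : Set X, IsCompact K ∧ e = missSet K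
  · rw [dif_pos h]; exact h.choose_spec.1
  · rw [dif_neg h]; exact isCompact_empty

lemma pair_mem_of_subbasic {e : Set (Set X)} (he : e ∈ fellSubbase X) {x z : X}
    (hx : {x} ∈ e) (hz : z ∉ compactPart e) : ({x, z} : Set X) ∈ e := by
  by_cases h : ∃ K : Set X, IsCompact K ∧ e = missSet K
  · have hspec := h.choose_spec
    have hcp : compactPart e = h.choose := by classical rw [compactPart, dif_pos h]
    rw [hspec.2] at hx ⊢
    rw [hcp] at hz
    rintro y (rfl | rfl)
    · exact hx rfl
    · exact hz
  · rcases he with ⟨U, hU, rfl⟩ | ⟨K, hK, heq⟩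
    · obtain ⟨y, hy, hyU⟩ := hx
      rcases hy with rfl
      exact ⟨y, Or.inl rfl, hyU⟩
    · exact absurd ⟨K, hK, heq⟩ h

/-- Union of the compact parts of a finite family of subbasic sets. -/
def kernelOf (f : Set (Set (Set X))) : Set X := ⋃ e ∈ f, compactPart e

lemma kernelOf_isCompact {f : Set (Set (Set X))} (hf : f.Finite) : IsCompact (kernelOf f) :=
  hf.isCompact_biUnion fun e _ => compactPart_isCompact e

lemma pair_mem_sInter {f : Set (Set (Set X))} (hsub : f ⊆ fellSubbase X) {x z : X}
    (hx : {x} ∈ ⋂₀ f) (hz : z ∉ kernelOf f) : ({x, z} : Set X) ∈ ⋂₀ f := by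
  intro e he
  refine pair_mem_of_subbasic (hsub he) (hx e he) fun hcp => hz ?_
  exact Set.mem_biUnion he hcp

end Extraction

section ClosedSets

variable {X : Type u} [TopologicalSpace X]

lemma hyper_eq_iff {S : Set (Set X)} {p q : FellHyper X S} :
    p = q ↔ Subtype.val p = Subtype.val q := Subtype.ext_iff

lemma isClosed_singleton_hyper [T1Space X] {S : Set (Set X)} {x : X} (hxS : {x} ∈ S) :
    IsClosed ({⟨{x}, hxS⟩} : Set (FellHyper X S)) := by
  rw [← isOpen_compl_iff]
  have hO : IsOpen[fellTopology X] (missSet {x} ∪ lowerSet ({x}ᶜ)) :=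
    @IsOpen.union _ _ _ (fellTopology X) (fellOpen_missSet isCompact_singleton)
      (fellOpen_lowerSet isOpen_compl_singleton)
  have : (Subtype.val ⁻¹' (missSet {x} ∪ lowerSet ({x}ᶜ)) : Set (FellHyper X S))
      = ({⟨{x}, hxS⟩} : Set (FellHyper X S))ᶜ := by
    ext ⟨A, hA⟩
    show (A ∈ missSet {x} ∪ _root_.lowerSet ({x}ᶜ)) ↔ ¬ ((⟨A, hA⟩ : FellHyper X S) = ⟨{x}, hxS⟩)
    refine Iff.trans ?_ (not_congr (hyper_eq_iff (p := ⟨A, hA⟩) (q := ⟨{x}, hxS⟩))).symm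
    show (A ∈ missSet {x} ∪ _root_.lowerSet ({x}ᶜ)) ↔ ¬ A = {x}
    constructor
    · rintro (h | ⟨y, hyA, hyx⟩)
      · rintro rfl
        exact h (Set.mem_singleton x) rfl
      · rintro rfl
        exact hyx hyA
    · intro hne
      by_cases hxA : x ∈ A
      · obtain ⟨y, hyA, hyx⟩ : ∃ y ∈ A, y ≠ x := by
          by_contra hcon
          push_neg at hcon
          exact hne (Set.eq_singleton_iff_unique_mem.mpr ⟨hxA, fun y hy => hcon y hy⟩)
        exact Or.inr ⟨y, hyA, hyx⟩
      · left
        intro y hy hyx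
        rw [Set.mem_singleton_iff] at hyx
        exact hxA (hyx ▸ hy)
  rw [← this]
  exact isOpen_hyper_preimage hO

/-- The set of singletons is closed in the hyperspace, provided all members of `S`
are nonempty. -/
lemma isClosed_F1_hyper [T2Space X] {S : Set (Set X)} (hne : ∀ A ∈ S, A.Nonempty) :
    IsClosed {p : FellHyper X S | ∃ x : X, p.val = {x}} := by
  rw [← isOpen_compl_iff]
  set 𝒲 : Set (Set X) :=
    ⋃ q ∈ {q : Set X × Set X | IsOpen q.1 ∧ IsOpen q.2 ∧ Disjoint q.1 q.2},
      _root_.lowerSet q.1 ∩ _root_.lowerSet q.2 with h𝒲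
  have hO : IsOpen[fellTopology X] 𝒲 := by
    refine @isOpen_biUnion _ _ (fellTopology X) _ _ fun q hq => ?_
    exact @IsOpen.inter _ (fellTopology X) _ _ (fellOpen_lowerSet hq.1) (fellOpen_lowerSet hq.2.1)
  have : (Subtype.val ⁻¹' 𝒲 : Set (FellHyper X S))
      = {p : FellHyper X S | ∃ x : X, p.val = {x}}ᶜ := by
    ext ⟨A, hA⟩
    show A ∈ 𝒲 ↔ ¬ ∃ x : X, A = {x}
    rw [h𝒲, Set.mem_iUnion₂]
    constructor
    · rintro ⟨q, ⟨hU, hV, hUV⟩, ⟨a, haA, haU⟩, ⟨b, hbA, hbV⟩⟩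
      rintro ⟨x, rfl⟩
      rcases haA with rfl
      rcases hbA with rfl
      exact hUV.ne_of_mem haU hbV rfl
    · intro hns
      have hnt : A.Nontrivial := by
        rcases (hne A hA).exists_eq_singleton_or_nontrivial with ⟨a, ha⟩ | h
        · exact absurd ⟨a, ha⟩ hns
        · exact h
      obtain ⟨a, haA, b, hbA, hab⟩ := hnt
      obtain ⟨U, V, hU, hV, haU, hbV, hUV⟩ := t2_separation hab
      exact ⟨(U, V), ⟨hU, hV, hUV⟩, ⟨a, haA, haU⟩, ⟨b, hbA, hbV⟩⟩
  rw [← this]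
  exact isOpen_hyper_preimage hO

end ClosedSets

section PointData

variable {X : Type u} [TopologicalSpace X] [T1Space X] [RegularSpace X]

/-- From the `D₁` property of a hyperspace containing all singletons and all doubletons
through `x`, extract a countable neighborhood base at `x` together with a countable
cofinal family of compact sets missing `x`. -/
lemma exists_pointData {S : Set (Set X)} (hD : IsD1Space (FellHyper X S))
    (hsing : ∀ z : X, ({z} : Set X) ∈ S) {x : X}
    (hdoub : ∀ z : X, z ≠ x → ({x, z} : Set X) ∈ S) :
    ∃ T : ℕ → Set X, ∃ M : ℕ → Set X,
      (∀ k, IsOpen (T k) ∧ x ∈ T k) ∧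
      (∀ V : Set X, IsOpen V → x ∈ V → ∃ k, T k ⊆ V) ∧
      (∀ k, IsCompact (M k)) ∧
      (∀ K : Set X, IsCompact K → x ∉ K → ∃ k, K ⊆ M k) := by
  set pt : FellHyper X S := ⟨{x}, hsing x⟩ with hpt
  obtain ⟨B, hB1, hB2⟩ := hD {pt} ⟨pt, rfl⟩ (isClosed_singleton_hyper (hsing x))
  have h : ∀ k, ∃ O : Set (Set X), IsOpen[fellTopology X] O ∧ Subtype.val ⁻¹' O = B k :=
    fun k => isOpen_hyper_iff.1 (hB1 k).1
  choose O hOopen hOpre using h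
  have hxO : ∀ k, ({x} : Set X) ∈ O k := by
    intro k
    have : pt ∈ B k := (hB1 k).2 rfl
    rw [← hOpre k] at this
    exact this
  have h2 : ∀ k, ∃ f : Set (Set (Set X)), f.Finite ∧ f ⊆ fellSubbase X ∧
      ({x} : Set X) ∈ ⋂₀ f ∧ ⋂₀ f ⊆ O k :=
    fun k => exists_finite_subbasis_nbhd (hOopen k) (hxO k)
  choose f hffin hfsub hxf hfO using h2
  refine ⟨fun k => {z : X | ({z} : Set X) ∈ O k}, fun k => kernelOf (f k), ?_, ?_, ?_, ?_⟩
  · intro k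
    constructor
    · exact @Continuous.isOpen_preimage X (Set X) _ (fellTopology X) _
        continuous_singleton_fell _ (hOopen k)
    · exact hxO k
  · intro V hV hxV
    have hopen : IsOpen (Subtype.val ⁻¹' lowerSet V : Set (FellHyper X S)) :=
      isOpen_hyper_preimage (fellOpen_lowerSet hV)
    have hmem : {pt} ⊆ (Subtype.val ⁻¹' lowerSet V : Set (FellHyper X S)) := by
      rintro p rfl
      exact ⟨x, by simp [hpt], hxV⟩
    obtain ⟨k, hk⟩ := hB2 _ hopen hmem
    refine ⟨k, fun z hz => ?_⟩
    have : (⟨{z}, hsing z⟩ : FellHyper X S) ∈ B k := by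
      rw [← hOpre k]; exact hz
    obtain ⟨w, hw, hwV⟩ := hk this
    rcases hw with rfl
    exact hwV
  · exact fun k => kernelOf_isCompact (hffin k)
  · intro K hK hxK
    have hopen : IsOpen (Subtype.val ⁻¹' missSet K : Set (FellHyper X S)) :=
      isOpen_hyper_preimage (fellOpen_missSet hK)
    have hmem : {pt} ⊆ (Subtype.val ⁻¹' missSet K : Set (FellHyper X S)) := by
      rintro p rfl
      intro w hw
      have hw' : w = x := hw
      subst hw'
      exact hxK
    obtain ⟨k, hk⟩ := hB2 _ hopen hmem
    refine ⟨k, fun z hzK => ?_⟩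
    by_contra hzM
    have hzx : z ≠ x := fun h => hxK (h ▸ hzK)
    have hpair : ({x, z} : Set X) ∈ ⋂₀ f k := pair_mem_sInter (hfsub k) (hxf k) hzM
    have : (⟨{x, z}, hdoub z hzx⟩ : FellHyper X S) ∈ B k := by
      rw [← hOpre k]
      exact hfO k hpair
    have h3 : ({x, z} : Set X) ⊆ Kᶜ := hk this
    exact h3 (Set.mem_insert_of_mem _ rfl) hzK

end PointData

section CompactnessFromD1

variable {X : Type u} [TopologicalSpace X] [T1Space X] [RegularSpace X]

lemma compactSpace_of_isD1 {S : Set (Set X)} (hD : IsD1Space (FellHyper X S))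
    (hsing : ∀ z : X, ({z} : Set X) ∈ S)
    (hdoub : ∀ a b : X, a ≠ b → ({a, b} : Set X) ∈ S)
    (hne : ∀ A ∈ S, A.Nonempty) : CompactSpace X := by
  by_contra hnc
  have hX : ¬ IsCompact (Set.univ : Set X) := fun h => hnc ⟨h⟩
  rcases isEmpty_or_nonempty X with hE | hNE
  · exact hX (by rw [Set.univ_eq_empty_iff.mpr hE]; exact isCompact_empty)
  obtain ⟨x, y, hxy⟩ : ∃ x y : X, x ≠ y := by
    by_contra hno
    push_neg at hno
    exact hX ((Set.subsingleton_univ_iff.mpr ⟨fun a b => hno a b⟩).finite.isCompact)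
  -- point data at x and at y
  obtain ⟨Tx, Mx, hTx1, hTx2, hMx1, hMx2⟩ :=
    exists_pointData hD hsing (fun z hz => hdoub x z (Ne.symm hz))
  obtain ⟨Ty, My, hTy1, hTy2, hMy1, hMy2⟩ :=
    exists_pointData hD hsing (fun z hz => hdoub y z (Ne.symm hz))
  -- increasing cofinal family of compact sets
  set C : ℕ → Set X := fun m => ({x, y} : Set X) ∪ ⋃ i ∈ Set.Iic m, (Mx i ∪ My i) with hC
  have hCcomp : ∀ m, IsCompact (C m) := by
    intro m
    exact ((Set.toFinite ({x, y} : Set X)).isCompact).union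
      ((Set.finite_Iic m).isCompact_biUnion fun i _ => (hMx1 i).union (hMy1 i))
  have hCmono : ∀ {m m'}, m ≤ m' → C m ⊆ C m' := by
    intro m m' hmm'
    apply Set.union_subset_union_right
    exact Set.biUnion_subset_biUnion_left (Set.Iic_subset_Iic.mpr hmm')
  have hCcof : ∀ K : Set X, IsCompact K → ∃ m, K ⊆ C m := by
    intro K hK
    obtain ⟨U, V, hU, hV, hxU, hyV, hUV⟩ := t2_separation hxy
    obtain ⟨i, hi⟩ := hMx2 (K ∩ Uᶜ) (hK.inter_right hU.isClosed_compl)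
      (fun h => h.2 hxU)
    obtain ⟨j, hj⟩ := hMy2 (K ∩ Vᶜ) (hK.inter_right hV.isClosed_compl)
      (fun h => h.2 hyV)
    refine ⟨max i j, fun z hz => ?_⟩
    have : z ∉ U ∨ z ∉ V := by
      by_contra hcon
      push_neg at hcon
      exact (hUV.ne_of_mem hcon.1 hcon.2) rfl
    right
    rcases this with h | h
    · exact Set.mem_biUnion (Set.mem_Iic.mpr (le_max_left i j)) (Or.inl (hi ⟨hz, h⟩))
    · exact Set.mem_biUnion (Set.mem_Iic.mpr (le_max_right i j)) (Or.inr (hj ⟨hz, h⟩))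
  -- every point is in the interior of some C m
  have hint : ∀ z : X, ∃ m, z ∈ interior (C m) := by
    intro z
    obtain ⟨Tz, Mz, hTz1, hTz2, _, _⟩ :=
      exists_pointData hD hsing (fun w hw => hdoub z w (Ne.symm hw))
    set T' : ℕ → Set X := fun k => ⋂ i ∈ Set.Iic k, Tz i with hT'
    have hT'open : ∀ k, IsOpen (T' k) :=
      fun k => (Set.finite_Iic k).isOpen_biInter fun i _ => (hTz1 i).1
    have hT'mem : ∀ k, z ∈ T' k := fun k => Set.mem_biInter fun i _ => (hTz1 i).2
    have hT'sub : ∀ {i k}, i ≤ k → T' k ⊆ Tz i := by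
      intro i k hik
      exact Set.biInter_subset_of_mem (Set.mem_Iic.mpr hik)
    by_contra hcon
    push_neg at hcon
    have hesc : ∀ k, ∃ w, w ∈ T' k ∧ w ∉ C k := by
      intro k
      have : ¬ T' k ⊆ C k := by
        intro hsub
        exact hcon k (mem_interior.mpr ⟨T' k, hsub, hT'open k, hT'mem k⟩)
      rw [Set.not_subset] at this
      obtain ⟨w, hw1, hw2⟩ := this
      exact ⟨w, hw1, hw2⟩
    choose w hw1 hw2 using hesc
    have htend : Filter.Tendsto w Filter.atTop (nhds z) := by
      rw [(nhds_basis_opens z).tendsto_right_iff]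
      rintro U ⟨hzU, hUopen⟩
      obtain ⟨k0, hk0⟩ := hTz2 U hUopen hzU
      exact Filter.eventually_atTop.mpr ⟨k0, fun k hk => hk0 (hT'sub hk (hw1 k))⟩
    obtain ⟨m, hm⟩ := hCcof _ htend.isCompact_insert_range
    exact hw2 m (hm (Set.mem_insert_of_mem _ ⟨m, rfl⟩))
  -- the set of singletons and its countable neighborhood base
  set F1 : Set (FellHyper X S) := {p | ∃ z : X, Subtype.val p = ({z} : Set X)} with hF1
  obtain ⟨B, hB1, hB2⟩ := hD F1 ⟨⟨{x}, hsing x⟩, ⟨x, rfl⟩⟩ (isClosed_F1_hyper hne)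
  have h : ∀ k, ∃ O : Set (Set X), IsOpen[fellTopology X] O ∧ Subtype.val ⁻¹' O = B k :=
    fun k => isOpen_hyper_iff.1 (hB1 k).1
  choose O hOopen hOpre using h
  have hsingO : ∀ (k) (z : X), ({z} : Set X) ∈ O k := by
    intro k z
    have : (⟨{z}, hsing z⟩ : FellHyper X S) ∈ B k := (hB1 k).2 ⟨z, rfl⟩
    rw [← hOpre k] at this
    exact this
  -- escaping doubletons
  have hx_esc : ∀ k, ∃ w : X, w ∉ C k := by
    intro k
    by_contra hcon
    push_neg at hcon
    have hCun : C k = Set.univ := Set.eq_univ_of_univ_subset (fun w _ => hcon w)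
    exact hX (hCun ▸ hCcomp k)
  choose xe hxe using hx_esc
  have h2 : ∀ k, ∃ f : Set (Set (Set X)), f.Finite ∧ f ⊆ fellSubbase X ∧
      ({xe k} : Set X) ∈ ⋂₀ f ∧ ⋂₀ f ⊆ O k :=
    fun k => exists_finite_subbasis_nbhd (hOopen k) (hsingO k (xe k))
  choose f hffin hfsub hxef hfO using h2
  have hy_esc : ∀ k, ∃ w : X, w ∉ C k ∪ kernelOf (f k) ∪ {xe k} := by
    intro k
    by_contra hcon
    push_neg at hcon
    have hcomp : IsCompact (C k ∪ kernelOf (f k) ∪ ({xe k} : Set X)) :=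
      ((hCcomp k).union (kernelOf_isCompact (hffin k))).union isCompact_singleton
    have hun : C k ∪ kernelOf (f k) ∪ ({xe k} : Set X) = Set.univ :=
      Set.eq_univ_of_univ_subset (fun w _ => hcon w)
    exact hX (hun ▸ hcomp)
  choose ye hye using hy_esc
  have hyeC : ∀ k, ye k ∉ C k := fun k h => hye k (Or.inl (Or.inl h))
  have hyeK : ∀ k, ye k ∉ kernelOf (f k) := fun k h => hye k (Or.inl (Or.inr h))
  have hyex : ∀ k, ye k ≠ xe k := fun k h => hye k (Or.inr (by simp [h]))
  set A : ℕ → Set X := fun k => ({xe k, ye k} : Set X) with hA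
  have hA_O : ∀ k, A k ∈ O k := fun k =>
    hfO k (pair_mem_sInter (hfsub k) (hxef k) (hyeK k))
  have hA_S : ∀ k, A k ∈ S := fun k => hdoub _ _ (Ne.symm (hyex k))
  have hA_C : ∀ k m, m ≤ k → A k ∩ C m = ∅ := by
    intro k m hmk
    rw [Set.eq_empty_iff_forall_notMem]
    rintro w ⟨hw1, hw2⟩
    rcases hw1 with rfl | rfl
    · exact hxe k (hCmono hmk hw2)
    · exact hyeC k (hCmono hmk hw2)
  -- the escaping open set 𝒱
  classical
  set j : X → ℕ := fun z => (hint z).choose with hj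
  have hjmem : ∀ z, z ∈ interior (C (j z)) := fun z => (hint z).choose_spec
  set L : X → Set X := fun z => (⋃ n ∈ Set.Iio (j z), A n) \ {z} with hL
  have hLcomp : ∀ z, IsCompact (L z) := by
    intro z
    refine Set.Finite.isCompact ?_
    exact (((Set.finite_Iio (j z)).biUnion fun n _ => (Set.toFinite (A n))).diff)
  set N : X → Set (Set X) := fun z => lowerSet (interior (C (j z))) ∩ missSet (L z) with hN
  have hNopen : ∀ z, IsOpen[fellTopology X] (N z) := fun z =>
    @IsOpen.inter _ (fellTopology X) _ _ (fellOpen_lowerSet isOpen_interior)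
      (fellOpen_missSet (hLcomp z))
  have hNz : ∀ z : X, ({z} : Set X) ∈ N z := by
    intro z
    constructor
    · exact ⟨z, rfl, hjmem z⟩
    · intro w hw
      have hw' : w = z := hw
      subst hw'
      exact fun h => h.2 rfl
  have hNA : ∀ (z : X) (k : ℕ), A k ∉ N z := by
    intro z k hmem
    rcases lt_or_ge k (j z) with hlt | hle
    · -- A k meets L z
      have : ∃ w, w ∈ A k ∧ w ≠ z := by
        by_cases hxz : xe k = z
        · exact ⟨ye k, Or.inr rfl, fun h => hyex k (h.trans hxz.symm)⟩
        · exact ⟨xe k, Or.inl rfl, hxz⟩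
      obtain ⟨w, hwA, hwz⟩ := this
      have hwL : w ∈ L z := ⟨Set.mem_biUnion (Set.mem_Iio.mpr hlt) hwA, hwz⟩
      exact hmem.2 hwA hwL
    · -- A k misses interior (C (j z))
      obtain ⟨w, hwA, hwI⟩ := hmem.1
      have : w ∈ A k ∩ C (j z) := ⟨hwA, interior_subset hwI⟩
      rw [hA_C k (j z) hle] at this
      exact this
  set 𝒱 : Set (Set X) := ⋃ z : X, N z with h𝒱
  have h𝒱open : IsOpen[fellTopology X] 𝒱 := @isOpen_iUnion _ _ (fellTopology X) _ hNopen
  have hF1sub : F1 ⊆ (Subtype.val ⁻¹' 𝒱 : Set (FellHyper X S)) := by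
    rintro p ⟨z, hz⟩
    have : Subtype.val p ∈ N z := hz ▸ hNz z
    exact Set.mem_iUnion.mpr ⟨z, this⟩
  obtain ⟨k, hk⟩ := hB2 _ (isOpen_hyper_preimage h𝒱open) hF1sub
  have hAB : (⟨A k, hA_S k⟩ : FellHyper X S) ∈ B k := by
    rw [← hOpre k]
    exact hA_O k
  obtain ⟨z, hz⟩ := Set.mem_iUnion.mp (hk hAB)
  exact hNA z k hz

end CompactnessFromD1

section GdeltaDiag

variable {X : Type u} [TopologicalSpace X] [T1Space X] [RegularSpace X]

lemma gdelta_diag_of_isD1 {S : Set (Set X)} (hD : IsD1Space (FellHyper X S))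
    (hsing : ∀ z : X, ({z} : Set X) ∈ S)
    (hdoub : ∀ a b : X, a ≠ b → ({a, b} : Set X) ∈ S)
    (hne : ∀ A ∈ S, A.Nonempty) [Nonempty X] :
    ∃ U : ℕ → Set (X × X), (∀ n, IsOpen (U n)) ∧ (⋂ n, U n) = {p : X × X | p.1 = p.2} := by
  set F1 : Set (FellHyper X S) := {p | ∃ z : X, Subtype.val p = ({z} : Set X)} with hF1
  have hx0 : ∃ z : X, True := ⟨Classical.arbitrary X, trivial⟩
  obtain ⟨x0, -⟩ := hx0
  obtain ⟨B, hB1, hB2⟩ := hD F1 ⟨⟨{x0}, hsing x0⟩, ⟨x0, rfl⟩⟩ (isClosed_F1_hyper hne)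
  have h : ∀ k, ∃ O : Set (Set X), IsOpen[fellTopology X] O ∧ Subtype.val ⁻¹' O = B k :=
    fun k => isOpen_hyper_iff.1 (hB1 k).1
  choose O hOopen hOpre using h
  have hsingO : ∀ (k) (z : X), ({z} : Set X) ∈ O k := by
    intro k z
    have : (⟨{z}, hsing z⟩ : FellHyper X S) ∈ B k := (hB1 k).2 ⟨z, rfl⟩
    rw [← hOpre k] at this
    exact this
  refine ⟨fun n => (fun p : X × X => ({p.1, p.2} : Set X)) ⁻¹' O n, ?_, ?_⟩
  · intro n
    exact @Continuous.isOpen_preimage (X × X) (Set X) _ (fellTopology X) _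
      continuous_pair_fell _ (hOopen n)
  · apply Set.Subset.antisymm
    · rintro ⟨a, b⟩ hab
      simp only [Set.mem_iInter, Set.mem_preimage] at hab
      by_contra hne'
      have hne'' : a ≠ b := hne'
      -- the open set avoiding {a, b}
      set 𝒱 : Set (Set X) := missSet ({a} : Set X) ∪ missSet ({b} : Set X) with h𝒱
      have h𝒱open : IsOpen[fellTopology X] 𝒱 :=
        @IsOpen.union _ _ _ (fellTopology X) (fellOpen_missSet isCompact_singleton)
          (fellOpen_missSet isCompact_singleton)
      have hF1sub : F1 ⊆ (Subtype.val ⁻¹' 𝒱 : Set (FellHyper X S)) := by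
        rintro p ⟨z, hz⟩
        rcases eq_or_ne z a with rfl | hza
        · right
          rw [hz]
          intro w hw
          have hw' : w = z := hw
          subst hw'
          simp only [Set.mem_compl_iff, Set.mem_singleton_iff]
          exact hne''
        · left
          rw [hz]
          intro w hw
          have hw' : w = z := hw
          subst hw'
          simp only [Set.mem_compl_iff, Set.mem_singleton_iff]
          exact hza
      obtain ⟨n, hn⟩ := hB2 _ (isOpen_hyper_preimage h𝒱open) hF1sub
      have hmem : (⟨{a, b}, hdoub a b hne''⟩ : FellHyper X S) ∈ B n := by
        rw [← hOpre n]
        exact hab n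
      rcases hn hmem with hmiss | hmiss
      · exact (hmiss (Set.mem_insert a {b})) rfl
      · exact (hmiss (Set.mem_insert_of_mem a rfl)) rfl
    · rintro ⟨a, b⟩ hab
      have : a = b := hab
      subst this
      simp only [Set.mem_iInter, Set.mem_preimage]
      intro n
      have : ({a, a} : Set X) = ({a} : Set X) := by simp
      rw [this]
      exact hsingO n a

end GdeltaDiag

section Sneider

variable {X : Type u} [TopologicalSpace X]

/-- A compact Hausdorff space with a `G_δ` diagonal is second countable. -/
lemma secondCountable_of_compact_gdelta_diag [CompactSpace X] [T2Space X]
    (U : ℕ → Set (X × X)) (hUo : ∀ n, IsOpen (U n))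
    (hUd : (⋂ n, U n) = {p : X × X | p.1 = p.2}) :
    SecondCountableTopology X := by
  classical
  have hdiag : IsClosed {p : X × X | p.1 = p.2} := isClosed_diagonal
  have hdsub : ∀ n, {p : X × X | p.1 = p.2} ⊆ U n := by
    intro n
    rw [← hUd]
    exact Set.iInter_subset _ n
  -- shrink using normality of X × X
  have hW : ∀ n, ∃ W : Set (X × X), IsOpen W ∧ {p : X × X | p.1 = p.2} ⊆ W ∧
      closure W ⊆ U n := fun n => normal_exists_closure_subset hdiag (hUo n) (hdsub n)
  choose W hWo hWd hWc using hW
  set W' : ℕ → Set (X × X) := fun n => ⋂ i ∈ Set.Iic n, W i with hW'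
  have hW'o : ∀ n, IsOpen (W' n) := fun n =>
    (Set.finite_Iic n).isOpen_biInter fun i _ => hWo i
  have hW'd : ∀ n, {p : X × X | p.1 = p.2} ⊆ W' n := fun n =>
    Set.subset_iInter₂ fun i _ => hWd i
  have hW'W : ∀ n, W' n ⊆ W n := fun n => Set.biInter_subset_of_mem (Set.mem_Iic.mpr le_rfl)
  -- squares inside W' n
  have hsq : ∀ (n : ℕ) (x : X), ∃ V : Set X, IsOpen V ∧ x ∈ V ∧ V ×ˢ V ⊆ W' n := by
    intro n x
    obtain ⟨V1, V2, hV1, hV2, hx1, hx2, hsub⟩ :=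
      isOpen_prod_iff.1 (hW'o n) x x (hW'd n rfl)
    refine ⟨V1 ∩ V2, hV1.inter hV2, ⟨hx1, hx2⟩, ?_⟩
    intro p hp
    exact hsub ⟨hp.1.1, hp.2.2⟩
  choose V hVo hVx hVsq using hsq
  -- finite subcovers
  have hcov : ∀ n : ℕ, ∃ t : Finset X, Set.univ ⊆ ⋃ x ∈ t, V n x := by
    intro n
    obtain ⟨t, _, ht⟩ := isCompact_univ.elim_nhds_subcover (V n)
      (fun x _ => (hVo n x).mem_nhds (hVx n x))
    exact ⟨t, ht⟩
  choose t ht using hcov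
  set 𝒱 : ℕ → Set (Set X) := fun n => (V n) '' (t n : Set X) with h𝒱
  have h𝒱count : (⋃ n, 𝒱 n).Countable :=
    Set.countable_iUnion fun n => ((t n).finite_toSet.image _).countable
  set ℬ : Set (Set X) := (fun g => ⋂₀ g) '' {g : Set (Set X) | g.Finite ∧ g ⊆ ⋃ n, 𝒱 n}
    with hℬ
  have hℬcount : ℬ.Countable :=
    (Set.countable_setOf_finite_subset h𝒱count).image _
  have hℬopen : ∀ b ∈ ℬ, IsOpen b := by
    rintro b ⟨g, ⟨hgfin, hgsub⟩, rfl⟩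
    refine hgfin.isOpen_sInter ?_
    intro s hs
    obtain ⟨n, hn⟩ := Set.mem_iUnion.mp (hgsub hs)
    obtain ⟨x, -, rfl⟩ := hn
    exact hVo n x
  -- star of a point
  have key : ∀ (a : X) (u : Set X), a ∈ u → IsOpen u →
      ∃ b ∈ ℬ, a ∈ b ∧ b ⊆ u := by
    intro a u hau huo
    set st : ℕ → Set X := fun n => ⋃₀ {s ∈ 𝒱 n | a ∈ s} with hst
    have hstW : ∀ n, st n ⊆ {c : X | (a, c) ∈ W' n} := by
      rintro n c ⟨s, ⟨hs𝒱, has⟩, hcs⟩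
      obtain ⟨x, -, rfl⟩ := hs𝒱
      exact hVsq n x ⟨has, hcs⟩
    have hclstW : ∀ n, closure (st n) ⊆ {c : X | (a, c) ∈ closure (W' n)} := by
      intro n
      have hcont : Continuous (fun c : X => ((a, c) : X × X)) := Continuous.prodMk_right a
      calc closure (st n) ⊆ closure ((fun c : X => ((a, c) : X × X)) ⁻¹' W' n) :=
            closure_mono (hstW n)
        _ ⊆ (fun c : X => ((a, c) : X × X)) ⁻¹' closure (W' n) :=
            hcont.closure_preimage_subset _
    set Fm : ℕ → Set X := fun m => uᶜ ∩ ⋂ i ∈ Set.Iic m, closure (st i) with hFm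
    have hFmclosed : ∀ m, IsClosed (Fm m) :=
      fun m => (huo.isClosed_compl).inter
        (isClosed_biInter fun i _ => isClosed_closure)
    have hFmdec : ∀ m, Fm (m + 1) ⊆ Fm m := by
      intro m
      apply Set.inter_subset_inter_right
      exact Set.biInter_subset_biInter_left (Set.Iic_subset_Iic.mpr (Nat.le_succ m))
    have hFmempty : (⋂ m, Fm m) = ∅ := by
      rw [Set.eq_empty_iff_forall_notMem]
      intro c hc
      simp only [Set.mem_iInter, hFm, Set.mem_inter_iff] at hc
      have hcu : c ∈ uᶜ := (hc 0).1
      have hccl : ∀ m, c ∈ closure (st m) := fun m =>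
        (hc m).2 m (Set.mem_Iic.mpr le_rfl)
      have hac : ((a, c) : X × X) ∈ ⋂ n, U n := by
        refine Set.mem_iInter.mpr fun n => ?_
        refine hWc n ?_
        have h1 : ((a, c) : X × X) ∈ closure (W' n) := hclstW n (hccl n)
        exact closure_mono (hW'W n) h1
      rw [hUd] at hac
      have : a = c := hac
      exact hcu (this ▸ hau)
    have hFmex : ∃ m, Fm m = ∅ := by
      by_contra hcon
      push_neg at hcon
      have hne' : ∀ m, (Fm m).Nonempty := hcon
      have := IsCompact.nonempty_iInter_of_sequence_nonempty_isCompact_isClosed Fm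
        hFmdec hne' ((hFmclosed 0).isCompact) hFmclosed
      rw [hFmempty] at this
      exact Set.not_nonempty_empty this
    obtain ⟨m, hm⟩ := hFmex
    have hpick : ∀ i : ℕ, ∃ s : Set X, s ∈ 𝒱 i ∧ a ∈ s := by
      intro i
      obtain ⟨x, hx, ha⟩ := Set.mem_iUnion₂.mp (ht i (Set.mem_univ a))
      exact ⟨V i x, ⟨x, hx, rfl⟩, ha⟩
    choose sfun hs𝒱 hsa using hpick
    refine ⟨⋂₀ (sfun '' Set.Iic m), ⟨sfun '' Set.Iic m,
      ⟨(Set.finite_Iic m).image _, ?_⟩, rfl⟩, ?_, ?_⟩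
    · rintro s ⟨i, -, rfl⟩
      exact Set.mem_iUnion.mpr ⟨i, hs𝒱 i⟩
    · rintro s ⟨i, -, rfl⟩
      exact hsa i
    · intro c hc
      by_contra hcu
      have hcF : c ∈ Fm m := by
        refine ⟨hcu, Set.mem_iInter₂.mpr fun i hi => ?_⟩
        have hcs : c ∈ sfun i := hc _ (Set.mem_image_of_mem sfun hi)
        have : c ∈ st i := ⟨sfun i, ⟨hs𝒱 i, hsa i⟩, hcs⟩
        exact subset_closure this
      rw [hm] at hcF
      exact hcF
  exact (TopologicalSpace.isTopologicalBasis_of_isOpen_of_nhds hℬopen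
    (fun a u hau huo => key a u hau huo)).secondCountableTopology hℬcount

end Sneider

section BackwardAssembly

lemma secondCountable_of_isEmpty {Y : Type v} [TopologicalSpace Y] [IsEmpty Y] :
    SecondCountableTopology Y := by
  have htop : ∀ t₁ t₂ : TopologicalSpace Y, t₁ = t₂ := by
    intro t₁ t₂
    apply TopologicalSpace.ext
    funext s
    have hs : s = ∅ := Set.eq_empty_of_isEmpty s
    subst hs
    simp only [eq_iff_iff]
    exact ⟨fun _ => @isOpen_empty _ t₂, fun _ => @isOpen_empty _ t₁⟩
  exact ⟨⟨∅, Set.countable_empty, htop _ _⟩⟩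

variable {X : Type u} [TopologicalSpace X] [T1Space X] [RegularSpace X]

lemma compact_metrizable_of_isD1 {S : Set (Set X)} (hD : IsD1Space (FellHyper X S))
    (hsing : ∀ z : X, ({z} : Set X) ∈ S)
    (hdoub : ∀ a b : X, a ≠ b → ({a, b} : Set X) ∈ S)
    (hne : ∀ A ∈ S, A.Nonempty) :
    CompactSpace X ∧ TopologicalSpace.MetrizableSpace X := by
  haveI hcomp : CompactSpace X := compactSpace_of_isD1 hD hsing hdoub hne
  rcases isEmpty_or_nonempty X with hE | hNE
  · haveI := secondCountable_of_isEmpty (Y := X)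
    exact ⟨hcomp, TopologicalSpace.metrizableSpace_of_t3_secondCountable X⟩
  · obtain ⟨U, hUo, hUd⟩ := gdelta_diag_of_isD1 hD hsing hdoub hne
    haveI := secondCountable_of_compact_gdelta_diag U hUo hUd
    exact ⟨hcomp, TopologicalSpace.metrizableSpace_of_t3_secondCountable X⟩

end BackwardAssembly

section Forward

variable {X : Type u} [TopologicalSpace X]

/-- The canonical limit of an ultrafilter on subsets of `X` in the Fell topology. -/
def limitSet (𝔘 : Ultrafilter (Set X)) : Set X :=
  {x : X | ∀ U : Set X, IsOpen U → x ∈ U → lowerSet U ∈ 𝔘}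

lemma limitSet_isClosed (𝔘 : Ultrafilter (Set X)) : IsClosed (limitSet 𝔘) := by
  rw [← isOpen_compl_iff]
  rw [isOpen_iff_forall_mem_open]
  intro x hx
  simp only [Set.mem_compl_iff, limitSet, Set.mem_setOf_eq] at hx
  push_neg at hx
  obtain ⟨U, hUo, hxU, hU𝔘⟩ := hx
  refine ⟨U, fun y hy hylim => hU𝔘 (hylim U hUo hy), hUo, hxU⟩

lemma limitSet_nonempty [CompactSpace X] {𝔘 : Ultrafilter (Set X)} {S : Set (Set X)}
    (hS : S ∈ 𝔘) (hne : ∀ A ∈ S, A.Nonempty) : (limitSet 𝔘).Nonempty := by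
  by_contra hcon
  rw [Set.not_nonempty_iff_eq_empty] at hcon
  have hx : ∀ x : X, ∃ U : Set X, IsOpen U ∧ x ∈ U ∧ lowerSet U ∉ 𝔘 := by
    intro x
    have : x ∉ limitSet 𝔘 := by rw [hcon]; exact Set.notMem_empty x
    simp only [limitSet, Set.mem_setOf_eq] at this
    push_neg at this
    exact this
  choose U hUo hxU hU𝔘 using hx
  obtain ⟨t, -, ht⟩ := isCompact_univ.elim_nhds_subcover U
    (fun x _ => (hUo x).mem_nhds (hxU x))
  have hmem : (⋂ x ∈ t, (lowerSet (U x))ᶜ) ∈ 𝔘 :=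
    (Filter.biInter_mem t.finite_toSet).mpr
      (fun x _ => Ultrafilter.compl_mem_iff_notMem.mpr (hU𝔘 x))
  obtain ⟨A, hA1, hA2⟩ := Ultrafilter.nonempty_of_mem (Filter.inter_mem hmem hS)
  obtain ⟨a, ha⟩ := hne A hA2
  obtain ⟨x, hxt, hax⟩ := Set.mem_iUnion₂.mp (ht (Set.mem_univ a))
  have : A ∈ (lowerSet (U x))ᶜ := Set.mem_iInter₂.mp hA1 x hxt
  exact this ⟨a, ha, hax⟩

lemma ultrafilter_le_nhds_limitSet [CompactSpace X] (𝔘 : Ultrafilter (Set X)) :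
    (𝔘 : Filter (Set X)) ≤ @nhds _ (fellTopology X) (limitSet 𝔘) := by
  rw [fellTopology_eq, nhds_generateFrom]
  refine le_iInf fun s => le_iInf fun hs => ?_
  obtain ⟨hmem, hsub⟩ := hs
  rw [Filter.le_principal_iff]
  rcases hsub with ⟨U, hUo, rfl⟩ | ⟨K, hK, rfl⟩
  · obtain ⟨x, hx, hxU⟩ := hmem
    exact hx U hUo hxU
  · -- each point of K is not in the limit set
    have hx : ∀ x ∈ K, ∃ U : Set X, IsOpen U ∧ x ∈ U ∧ lowerSet U ∉ 𝔘 := by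
      intro x hxK
      have hxlim : x ∉ limitSet 𝔘 := fun h => (hmem h) hxK
      simp only [limitSet, Set.mem_setOf_eq] at hxlim
      push_neg at hxlim
      exact hxlim
    classical
    set U : X → Set X := fun x =>
      if h : ∃ U : Set X, IsOpen U ∧ x ∈ U ∧ lowerSet U ∉ 𝔘 then h.choose else Set.univ
      with hU
    have hUspec : ∀ x ∈ K, IsOpen (U x) ∧ x ∈ U x ∧ lowerSet (U x) ∉ 𝔘 := by
      intro x hxK
      have h := hx x hxK
      simp only [hU, dif_pos h]
      exact h.choose_spec
    obtain ⟨t, htK, ht⟩ := hK.elim_nhds_subcover U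
      (fun x hxK => ((hUspec x hxK).1).mem_nhds (hUspec x hxK).2.1)
    have hmem2 : (⋂ x ∈ t, (lowerSet (U x))ᶜ) ∈ 𝔘 :=
      (Filter.biInter_mem t.finite_toSet).mpr
        (fun x hxt => Ultrafilter.compl_mem_iff_notMem.mpr (hUspec x (htK x hxt)).2.2)
    refine Filter.mem_of_superset hmem2 ?_
    intro C hC
    intro w hwC
    intro hwK
    obtain ⟨x, hxt, hwx⟩ := Set.mem_iUnion₂.mp (ht hwK)
    exact Set.mem_iInter₂.mp hC x hxt ⟨w, hwC, hwx⟩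

lemma compactSpace_hyper [CompactSpace X] {S : Set (Set X)}
    (hlim : ∀ 𝔘 : Ultrafilter (Set X), S ∈ 𝔘 → limitSet 𝔘 ∈ S) :
    CompactSpace (FellHyper X S) := by
  refine ⟨isCompact_iff_ultrafilter_le_nhds.mpr fun f _ => ?_⟩
  set 𝔘 : Ultrafilter (Set X) := f.map Subtype.val with h𝔘
  have hS : S ∈ 𝔘 := by
    have : Subtype.val ⁻¹' S = (Set.univ : Set (FellHyper X S)) :=
      Set.eq_univ_of_forall fun p => p.2
    rw [h𝔘]
    show Subtype.val ⁻¹' S ∈ f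
    rw [this]
    exact Filter.univ_mem
  have hmem : limitSet 𝔘 ∈ S := hlim 𝔘 hS
  refine ⟨⟨limitSet 𝔘, hmem⟩, Set.mem_univ _, ?_⟩
  have h1 : (𝔘 : Filter (Set X)) ≤ @nhds _ (fellTopology X) (limitSet 𝔘) :=
    ultrafilter_le_nhds_limitSet 𝔘
  replace h1 : Filter.map (Subtype.val : FellHyper X S → Set X) (f : Filter (FellHyper X S)) ≤
      @nhds _ (fellTopology X) (limitSet 𝔘) := h1
  have h2 : (f : Filter (FellHyper X S)) ≤
      Filter.comap Subtype.val (@nhds _ (fellTopology X) (limitSet 𝔘)) :=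
    Filter.map_le_iff_le_comap.mp h1
  have h3 : @nhds (FellHyper X S) (FellHyper.instTopologicalSpace X S) ⟨limitSet 𝔘, hmem⟩ =
      Filter.comap Subtype.val (@nhds _ (fellTopology X) (limitSet 𝔘)) :=
    @nhds_induced (Set X) (FellHyper X S) (fellTopology X) Subtype.val ⟨limitSet 𝔘, hmem⟩
  rw [h3]
  exact h2

lemma t2Space_hyper [T2Space X] [CompactSpace X] {S : Set (Set X)}
    (hcl : ∀ A ∈ S, IsClosed A) : T2Space (FellHyper X S) := by
  have key : ∀ (p q : FellHyper X S) (x : X), x ∈ Subtype.val p → x ∉ Subtype.val q →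
      ∃ u v : Set (FellHyper X S), IsOpen u ∧ IsOpen v ∧ p ∈ u ∧ q ∈ v ∧ Disjoint u v := by
    intro p q x hxp hxq
    obtain ⟨L, hL, hxL, hLq⟩ := exists_compact_between isCompact_singleton
      (hcl _ q.2).isOpen_compl (by simpa using hxq)
    refine ⟨Subtype.val ⁻¹' lowerSet (interior L), Subtype.val ⁻¹' missSet L,
      isOpen_hyper_preimage (fellOpen_lowerSet isOpen_interior),
      isOpen_hyper_preimage (fellOpen_missSet hL),
      ⟨x, hxp, hxL rfl⟩, fun w hw hwL => hLq hwL hw, ?_⟩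
    rw [Set.disjoint_left]
    rintro C ⟨w, hwC, hwI⟩ hC2
    exact (hC2 hwC) (interior_subset hwI)
  refine ⟨fun p q hpq => ?_⟩
  have hv : Subtype.val p ≠ Subtype.val q := fun h => hpq (Subtype.ext h)
  have : ∃ x, (x ∈ Subtype.val p ∧ x ∉ Subtype.val q) ∨
      (x ∈ Subtype.val q ∧ x ∉ Subtype.val p) := by
    by_contra h
    push_neg at h
    apply hv
    ext z
    exact ⟨fun hz => (h z).1 hz, fun hz => (h z).2 hz⟩
  obtain ⟨x, ⟨h1, h2⟩ | ⟨h1, h2⟩⟩ := this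
  · exact key p q x h1 h2
  · obtain ⟨u, v, hu, hv', hqu, hpv, hd⟩ := key q p x h1 h2
    exact ⟨v, u, hv', hu, hpv, hqu, hd.symm⟩

end Forward

section FellSecondCountable

variable {X : Type u} [TopologicalSpace X]

/-- If `X` is compact Hausdorff second countable and all members of `S` are closed, then the
Fell hyperspace over `S` is second countable. -/
lemma hyper_secondCountable [CompactSpace X] [T2Space X] [SecondCountableTopology X]
    {S : Set (Set X)} (hScl : ∀ A ∈ S, IsClosed A) :
    SecondCountableTopology (FellHyper X S) := by
  classical
  obtain ⟨b, hbcount, -, hbasis⟩ := TopologicalSpace.exists_countable_basis X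
  set 𝔖 : Set (Set (Set X)) :=
    (lowerSet '' b) ∪
      ((fun t : Set (Set X) => missSet (closure (⋃₀ t))) '' {t : Set (Set X) | t.Finite ∧ t ⊆ b})
    with h𝔖
  have h𝔖count : 𝔖.Countable :=
    (hbcount.image _).union ((Set.countable_setOf_finite_subset hbcount).image _)
  -- the induced topologies agree on the subtype
  have h1 : FellHyper.instTopologicalSpace X S =
      TopologicalSpace.induced Subtype.val (TopologicalSpace.generateFrom 𝔖) := by
    refine le_antisymm ?_ ?_
    · -- fell-induced is finer: every 𝔖-generator is Fell-open
      apply induced_mono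
      rw [le_generateFrom_iff_subset_isOpen]
      rintro s (⟨U, hUb, rfl⟩ | ⟨t, ⟨htfin, htb⟩, rfl⟩)
      · exact fellOpen_lowerSet (hbasis.isOpen hUb)
      · exact fellOpen_missSet isClosed_closure.isCompact
    · -- 𝔖-induced is finer on the subtype
      show TopologicalSpace.induced Subtype.val (TopologicalSpace.generateFrom 𝔖)
        ≤ TopologicalSpace.induced Subtype.val (fellTopology X)
      rw [fellTopology_eq, induced_generateFrom_eq, induced_generateFrom_eq,
        le_generateFrom_iff_subset_isOpen]
      rintro s ⟨s', hs', rfl⟩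
      rcases hs' with ⟨U, hUo, rfl⟩ | ⟨K, hK, rfl⟩
      · -- lower sets
        have heq : (Subtype.val ⁻¹' {H : Set X | (H ∩ U).Nonempty} : Set (FellHyper X S))
            = ⋃ B ∈ {B ∈ b | B ⊆ U}, Subtype.val ⁻¹' lowerSet B := by
          ext ⟨A, hA⟩
          constructor
          · rintro ⟨x, hxA, hxU⟩
            obtain ⟨B, hBb, hxB, hBU⟩ := hbasis.exists_subset_of_mem_open hxU hUo
            exact Set.mem_iUnion₂.mpr ⟨B, ⟨hBb, hBU⟩, ⟨x, hxA, hxB⟩⟩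
          · rintro hA'
            obtain ⟨B, ⟨hBb, hBU⟩, ⟨x, hxA, hxB⟩⟩ := Set.mem_iUnion₂.mp hA'
            exact ⟨x, hxA, hBU hxB⟩
        rw [show (Subtype.val ⁻¹' {H : Set X | (H ∩ U).Nonempty} : Set {A : Set X // A ∈ S}) = _ from heq]
        refine @isOpen_biUnion _ _ (TopologicalSpace.generateFrom (Set.preimage Subtype.val '' 𝔖))
          _ _ fun B hB => ?_
        exact TopologicalSpace.isOpen_generateFrom_of_mem
          ⟨lowerSet B, Or.inl ⟨B, hB.1, rfl⟩, rfl⟩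
      · -- miss sets: here closedness of the members of `S` is used
        have heq : (Subtype.val ⁻¹' {H : Set X | H ⊆ Kᶜ} : Set (FellHyper X S))
            = ⋃ t ∈ {t : Set (Set X) | (t.Finite ∧ t ⊆ b) ∧ K ⊆ ⋃₀ t},
                Subtype.val ⁻¹' missSet (closure (⋃₀ t)) := by
          ext ⟨A, hA⟩
          constructor
          · intro hAK
            have hAcl : IsClosed A := hScl A hA
            have hpick : ∀ x ∈ K, ∃ B : Set X, B ∈ b ∧ x ∈ B ∧ closure B ⊆ Aᶜ := by
              intro x hxK
              have hxA : Aᶜ ∈ nhds x :=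
                hAcl.isOpen_compl.mem_nhds (fun hxA => hAK hxA hxK)
              obtain ⟨V, hV𝓝, hVcl, hVsub⟩ := exists_mem_nhds_isClosed_subset hxA
              obtain ⟨B, hBb, hxB, hBV⟩ := hbasis.exists_subset_of_mem_open
                (mem_interior_iff_mem_nhds.mpr hV𝓝) isOpen_interior
              refine ⟨B, hBb, hxB, ?_⟩
              calc closure B ⊆ closure (interior V) := closure_mono hBV
                _ ⊆ closure V := closure_mono interior_subset
                _ = V := hVcl.closure_eq
                _ ⊆ Aᶜ := hVsub
            set BB : X → Set X := fun x =>
              if h : ∃ B : Set X, B ∈ b ∧ x ∈ B ∧ closure B ⊆ Aᶜ then h.choose else Set.univ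
              with hBB
            have hBBspec : ∀ x ∈ K, BB x ∈ b ∧ x ∈ BB x ∧ closure (BB x) ⊆ Aᶜ := by
              intro x hxK
              have h := hpick x hxK
              simp only [hBB, dif_pos h]
              exact h.choose_spec
            obtain ⟨t₀, ht₀K, ht₀⟩ := hK.elim_nhds_subcover BB
              (fun x hxK => (hbasis.isOpen (hBBspec x hxK).1).mem_nhds (hBBspec x hxK).2.1)
            set t : Set (Set X) := BB '' ↑t₀ with ht
            have htfin : t.Finite := t₀.finite_toSet.image _
            have htb : t ⊆ b := by
              rintro s ⟨x, hx, rfl⟩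
              exact (hBBspec x (ht₀K x hx)).1
            have htK : K ⊆ ⋃₀ t := by
              intro x hxK
              obtain ⟨y, hyt, hxy⟩ := Set.mem_iUnion₂.mp (ht₀ hxK)
              exact ⟨BB y, Set.mem_image_of_mem _ hyt, hxy⟩
            refine Set.mem_iUnion₂.mpr ⟨t, ⟨⟨htfin, htb⟩, htK⟩, ?_⟩
            show A ⊆ (closure (⋃₀ t))ᶜ
            intro w hwA hwcl
            rw [htfin.closure_sUnion] at hwcl
            obtain ⟨s', hs't, hws'⟩ := Set.mem_iUnion₂.mp hwcl
            obtain ⟨x, hx, rfl⟩ := hs't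
            exact (hBBspec x (ht₀K x hx)).2.2 hws' hwA
          · rintro hA'
            obtain ⟨t, ⟨⟨htfin, htb⟩, htK⟩, hAt⟩ := Set.mem_iUnion₂.mp hA'
            intro x hxA hxK
            exact hAt hxA (subset_closure (htK hxK))
        rw [show (Subtype.val ⁻¹' {H : Set X | H ⊆ Kᶜ} : Set {A : Set X // A ∈ S}) = _ from heq]
        refine @isOpen_biUnion _ _ (TopologicalSpace.generateFrom (Set.preimage Subtype.val '' 𝔖))
          _ _ fun t ht => ?_
        exact TopologicalSpace.isOpen_generateFrom_of_mem
          ⟨missSet (closure (⋃₀ t)), Or.inr ⟨t, ht.1, rfl⟩, rfl⟩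
  -- second countability of the 𝔖-generated topology and transfer
  haveI hSC : @SecondCountableTopology (Set X) (TopologicalSpace.generateFrom 𝔖) :=
    @TopologicalSpace.IsTopologicalBasis.secondCountableTopology _
      (TopologicalSpace.generateFrom 𝔖) _
      (@TopologicalSpace.isTopologicalBasis_of_subbasis (Set X)
        (TopologicalSpace.generateFrom 𝔖) _ rfl)
      ((Set.countable_setOf_finite_subset h𝔖count).image _)
  have hind : @Topology.IsInducing (FellHyper X S) (Set X)
      (TopologicalSpace.induced Subtype.val (TopologicalSpace.generateFrom 𝔖))
      (TopologicalSpace.generateFrom 𝔖) Subtype.val :=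
    @Topology.IsInducing.mk (FellHyper X S) (Set X)
      (TopologicalSpace.induced Subtype.val (TopologicalSpace.generateFrom 𝔖))
      (TopologicalSpace.generateFrom 𝔖) Subtype.val rfl
  have h2 := @Topology.IsInducing.secondCountableTopology _ _
    (TopologicalSpace.induced Subtype.val (TopologicalSpace.generateFrom 𝔖))
    Subtype.val (TopologicalSpace.generateFrom 𝔖) hSC hind
  exact cast (congrArg (@SecondCountableTopology (FellHyper X S)) h1).symm h2

end FellSecondCountable

section D1Compact

lemma isD1Space_of_compact_metrizable (Y : Type v) [TopologicalSpace Y] [CompactSpace Y]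
    [TopologicalSpace.MetrizableSpace Y] : IsD1Space Y := by
  letI : MetricSpace Y := TopologicalSpace.metrizableSpaceMetric Y
  intro F hFne hFcl
  refine ⟨fun n => Metric.thickening (1 / (n + 1)) F, fun n =>
    ⟨Metric.isOpen_thickening, Metric.self_subset_thickening (by positivity) F⟩, ?_⟩
  intro V hV hFV
  obtain ⟨δ, hδ, hsub⟩ := (hFcl.isCompact).exists_thickening_subset_open hV hFV
  obtain ⟨n, hn⟩ := exists_nat_one_div_lt hδ
  exact ⟨n, (Metric.thickening_mono (le_of_lt hn) F).trans hsub⟩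

end D1Compact

section ForwardMain

variable {X : Type u} [TopologicalSpace X]

/-- Main forward lemma: if `X` is compact Hausdorff second countable and `S` consists of
closed sets and is closed under ultrafilter limits, then the Fell hyperspace is `D₁`. -/
lemma isD1_hyper_of_closed_limits [CompactSpace X] [T2Space X] [SecondCountableTopology X]
    {S : Set (Set X)} (hScl : ∀ A ∈ S, IsClosed A)
    (hlim : ∀ 𝔘 : Ultrafilter (Set X), S ∈ 𝔘 → limitSet 𝔘 ∈ S) :
    IsD1Space (FellHyper X S) := by
  haveI := compactSpace_hyper hlim
  haveI := t2Space_hyper hScl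
  haveI := hyper_secondCountable hScl
  haveI := TopologicalSpace.metrizableSpace_of_t3_secondCountable (FellHyper X S)
  exact isD1Space_of_compact_metrizable (FellHyper X S)


lemma isD1_CL [CompactSpace X] [T2Space X] [SecondCountableTopology X] :
    IsD1Space (FellHyper X (CL X)) := by
  refine isD1_hyper_of_closed_limits (fun A hA => hA.2) ?_
  intro 𝔘 hS
  exact ⟨limitSet_nonempty hS (fun A hA => hA.1), limitSet_isClosed 𝔘⟩

lemma Kcal_eq_CL [CompactSpace X] [T2Space X] : Kcal X = CL X := by
  ext A
  exact and_congr_right fun _ => ⟨fun h => h.isClosed, fun h => h.isCompact⟩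

lemma three_distinct {α : Type v} {s : Set α} (h : 2 < s.encard) :
    ∃ a b c, a ∈ s ∧ b ∈ s ∧ c ∈ s ∧ a ≠ b ∧ a ≠ c ∧ b ≠ c := by
  obtain ⟨a, ha⟩ : s.Nonempty := Set.encard_pos.mp (lt_trans (by norm_num) h)
  have hdiff : 1 < (s \ {a}).encard := by
    have he : (s \ {a}).encard + 1 = s.encard := Set.encard_diff_singleton_add_one ha
    by_contra hle
    push_neg at hle
    have : s.encard ≤ 2 := by
      calc s.encard = (s \ {a}).encard + 1 := he.symm
        _ ≤ 1 + 1 := by exact add_le_add hle le_rfl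
        _ = 2 := one_add_one_eq_two
    exact absurd h (not_lt.mpr this)
  obtain ⟨b, c, hb, hc, hbc⟩ := Set.one_lt_encard_iff.mp hdiff
  exact ⟨a, b, c, ha, hb.1, hc.1,
    fun h' => hb.2 (by simp [h'.symm]), fun h' => hc.2 (by simp [h'.symm]), hbc⟩

lemma isD1_Fn2 [CompactSpace X] [T2Space X] [SecondCountableTopology X] :
    IsD1Space (FellHyper X (Fn X 2)) := by
  refine isD1_hyper_of_closed_limits
    (fun A hA => (Set.finite_of_encard_le_coe (by exact_mod_cast hA.2)).isClosed) ?_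
  intro 𝔘 hS
  refine ⟨limitSet_nonempty hS (fun A hA => hA.1), ?_⟩
  by_contra hcard
  push_neg at hcard
  obtain ⟨x, y, z, hx, hy, hz, hxy, hxz, hyz⟩ := three_distinct (by exact_mod_cast hcard)
  obtain ⟨u1, v1, hu1, hv1, hxu1, hyv1, hd1⟩ := t2_separation hxy
  obtain ⟨u2, w1, hu2, hw1, hxu2, hzw1, hd2⟩ := t2_separation hxz
  obtain ⟨v2, w2, hv2, hw2, hyv2, hzw2, hd3⟩ := t2_separation hyz
  have hU : lowerSet (u1 ∩ u2) ∈ 𝔘 := hx _ (hu1.inter hu2) ⟨hxu1, hxu2⟩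
  have hV : lowerSet (v1 ∩ v2) ∈ 𝔘 := hy _ (hv1.inter hv2) ⟨hyv1, hyv2⟩
  have hW : lowerSet (w1 ∩ w2) ∈ 𝔘 := hz _ (hw1.inter hw2) ⟨hzw1, hzw2⟩
  obtain ⟨C, hC⟩ := Ultrafilter.nonempty_of_mem
    (Filter.inter_mem (Filter.inter_mem hU hV) (Filter.inter_mem hW hS))
  obtain ⟨⟨⟨a, haC, hau⟩, ⟨b, hbC, hbv⟩⟩, ⟨c, hcC, hcw⟩, hCS⟩ := hC
  have hab : a ≠ b := fun h => hd1.ne_of_mem hau.1 hbv.1 h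
  have hac : a ≠ c := fun h => hd2.ne_of_mem hau.2 hcw.1 h
  have hbc : b ≠ c := fun h => hd3.ne_of_mem hbv.2 hcw.2 h
  have hsub : ({a, b, c} : Set X) ⊆ C := by
    rintro w (rfl | rfl | rfl) <;> assumption
  have h3 : ({a, b, c} : Set X).encard = 3 := by
    rw [Set.encard_insert_of_notMem (by simp [hab, hac]), Set.encard_pair hbc]
    rfl
  have : (3 : ℕ∞) ≤ C.encard := h3 ▸ Set.encard_le_encard hsub
  have : (3 : ℕ∞) ≤ 2 := le_trans this (by exact_mod_cast hCS.2)
  norm_num at this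

end ForwardMain

/-- characterization of spaces whose Fell hyperspaces are `D₁`-spaces. -/
theorem statement4 (X : Type u) [TopologicalSpace X] [T1Space X] [RegularSpace X] :
    List.TFAE
      [IsD1Space (FellHyper X (CL X)),
       IsD1Space (FellHyper X (Kcal X)),
       ∃ n, 2 ≤ n ∧ IsD1Space (FellHyper X (Fn X n)),
       CompactSpace X ∧ TopologicalSpace.MetrizableSpace X] := by
  haveI : T3Space X := inferInstance
  tfae_have 1 → 4 := fun h =>
    compact_metrizable_of_isD1 h (fun z => ⟨⟨z, rfl⟩, isClosed_singleton⟩)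
      (fun a b hab => ⟨⟨a, by simp⟩, (Set.toFinite _).isClosed⟩) (fun A hA => hA.1)
  tfae_have 2 → 4 := fun h =>
    compact_metrizable_of_isD1 h (fun z => ⟨⟨z, rfl⟩, isCompact_singleton⟩)
      (fun a b hab => ⟨⟨a, by simp⟩, (Set.toFinite _).isCompact⟩) (fun A hA => hA.1)
  tfae_have 3 → 4 := by
    rintro ⟨n, hn, h⟩
    refine compact_metrizable_of_isD1 h (fun z => ⟨⟨z, rfl⟩, ?_⟩)
      (fun a b hab => ⟨⟨a, by simp⟩, ?_⟩) (fun A hA => hA.1)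
    · rw [Set.encard_singleton]
      exact_mod_cast le_trans one_le_two hn
    · rw [Set.encard_pair hab]
      exact_mod_cast hn
  tfae_have 4 → 1 := by
    rintro ⟨hc, hm⟩
    haveI := hc
    haveI := hm
    letI : MetricSpace X := TopologicalSpace.metrizableSpaceMetric X
    haveI : SecondCountableTopology X := inferInstance
    exact isD1_CL
  tfae_have 4 → 2 := by
    rintro ⟨hc, hm⟩
    haveI := hc
    haveI := hm
    letI : MetricSpace X := TopologicalSpace.metrizableSpaceMetric X
    haveI : SecondCountableTopology X := inferInstance
    rw [show Kcal X = CL X from Kcal_eq_CL]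
    exact isD1_CL
  tfae_have 4 → 3 := by
    rintro ⟨hc, hm⟩
    haveI := hc
    haveI := hm
    letI : MetricSpace X := TopologicalSpace.metrizableSpaceMetric X
    haveI : SecondCountableTopology X := inferInstance
    exact ⟨2, le_rfl, isD1_Fn2⟩
  tfae_finish
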